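/- Let 1 < p, q < ∞ with 1/p + 1/q = 1 and suppose φₙ : Ω → ℝ satisfies ∑ₙ|φₙ(x)|^q < ∞ for every x ∈ Ω. If the left-sided sequence set A := {(φₙ(x))ₙ : x ∈ Ω} is a compact subset of ℓq, then every function f_a with a ∈ ℓp and ‖a‖_{ℓp} ≤ 1 is bounded on Ω, and the set {f_a : a ∈ ℓp, ‖a‖_{ℓp} ≤ 1} is totally bounded with respect to the supremum metric on bounded real-valued functions on Ω; that is, the identity map from the unit ball of the p-norm space B_K^p(Ω) into ℓ∞(Ω) has relatively compact image. -/

import Mathlib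

set_option maxHeartbeats 1000000

/-- **Compactness of the imbedding of the unit ball of `B_K^p(Ω)` into `ℓ∞(Ω)`.**
Let `1 < p, q < ∞` with `1/p + 1/q = 1`, and suppose `∑ₙ |φₙ x|^q < ∞` for every
`x ∈ Ω`. If the left-sided sequence set `A = {(φₙ x)ₙ : x ∈ Ω}` is compact in
`ℓq`, then every `f_a` with `a ∈ ℓp`, `‖a‖_{ℓp} ≤ 1` is bounded on `Ω`, and the
set `{f_a : ‖a‖_{ℓp} ≤ 1}` is totally bounded in the supremum metric: for every
`ε > 0` there is a finite ε-net. -/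
theorem stmt5 {Ω : Type*} (p q : ℝ) (hp : 1 < p) (hq : 1 < q)
    (hpq : 1 / p + 1 / q = 1)
    (φ : ℕ → Ω → ℝ) [Fact (1 ≤ ENNReal.ofReal q)]
    (hCq : ∀ x : Ω, Summable fun n => |φ n x| ^ q)
    (hcompact : IsCompact
      {f : lp (fun _ : ℕ => ℝ) (ENNReal.ofReal q) | ∃ x : Ω, ∀ n, f n = φ n x}) :
    -- every f_a in the unit ball of B_K^p(Ω) is bounded on Ω
    (∀ a : ℕ → ℝ, (Summable fun n => |a n| ^ p) →
      (∑' n, |a n| ^ p) ^ (1 / p) ≤ 1 →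
      ∃ M : ℝ, ∀ x : Ω, |∑' n, a n * φ n x| ≤ M) ∧
    -- the image of the unit ball is totally bounded for the sup metric on ℓ∞(Ω)
    (∀ ε : ℝ, 0 < ε →
      ∃ G : Set (Ω → ℝ), G.Finite ∧
        ∀ a : ℕ → ℝ, (Summable fun n => |a n| ^ p) →
          (∑' n, |a n| ^ p) ^ (1 / p) ≤ 1 →
          ∃ g ∈ G, ∀ x : Ω, |(∑' n, a n * φ n x) - g x| ≤ ε) := by
  set P := ENNReal.ofReal p with hP
  set Q := ENNReal.ofReal q with hQ
  haveI : Fact (1 ≤ P) := ⟨ENNReal.one_le_ofReal.2 hp.le⟩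
  have hPt : P.toReal = p := ENNReal.toReal_ofReal (by linarith)
  have hQt : Q.toReal = q := ENNReal.toReal_ofReal (by linarith)
  have hconj : P.toReal.HolderConjugate Q.toReal := by
    rw [hPt, hQt]
    exact Real.holderConjugate_iff.mpr ⟨hp, by rw [← one_div, ← one_div]; exact hpq⟩
  -- the sequences φ(x) as elements of ℓq
  have Φmem : ∀ x : Ω, Memℓp (fun n => φ n x) Q := by
    intro x
    apply memℓp_gen
    rw [hQt]
    simpa [Real.norm_eq_abs] using hCq x
  set Φ : Ω → lp (fun _ : ℕ => ℝ) Q := fun x => ⟨fun n => φ n x, Φmem x⟩ with hΦ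
  have ΦS : ∀ x : Ω,
      Φ x ∈ {f : lp (fun _ : ℕ => ℝ) Q | ∃ x : Ω, ∀ n, f n = φ n x} :=
    fun x => ⟨x, fun n => rfl⟩
  -- the elements a as elements of ℓp, with norm control
  have Amem : ∀ a : ℕ → ℝ, (Summable fun n => |a n| ^ p) → Memℓp a P := by
    intro a ha
    apply memℓp_gen
    rw [hPt]
    simpa [Real.norm_eq_abs] using ha
  have Anorm : ∀ a : ℕ → ℝ, (ha : Summable fun n => |a n| ^ p) →
      ‖(⟨a, Amem a ha⟩ : lp (fun _ : ℕ => ℝ) P)‖ = (∑' n, |a n| ^ p) ^ (1 / p) := by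
    intro a ha
    rw [lp.norm_eq_tsum_rpow (by rw [hPt]; linarith) _]
    simp [hPt, Real.norm_eq_abs]
  -- Hölder's inequality
  have holder : ∀ (A : lp (fun _ : ℕ => ℝ) P) (B : lp (fun _ : ℕ => ℝ) Q),
      (Summable fun n => A n * B n) ∧ |∑' n, A n * B n| ≤ ‖A‖ * ‖B‖ := by
    intro A B
    obtain ⟨hs, hle⟩ := lp.tsum_mul_le_mul_norm hconj A B
    have hs' : Summable fun n => |A n * B n| := by
      simpa [Real.norm_eq_abs, abs_mul] using hs
    have hs'' : Summable fun n => ‖A n * B n‖ := by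
      simpa [Real.norm_eq_abs, abs_mul] using hs'
    refine ⟨hs'.of_abs, ?_⟩
    calc |∑' n, A n * B n| ≤ ∑' n, ‖A n * B n‖ := norm_tsum_le_tsum_norm hs''
      _ ≤ ‖A‖ * ‖B‖ := by
          refine le_trans (le_of_eq ?_) hle
          simp [Real.norm_eq_abs, abs_mul]
  -- uniform bound M on ‖Φ x‖
  obtain ⟨M₀, hM₀⟩ := hcompact.isBounded.exists_norm_le
  set M : ℝ := max M₀ 0 with hMdef
  have hMΦ : ∀ x : Ω, ‖Φ x‖ ≤ M := fun x => le_trans (hM₀ _ (ΦS x)) (le_max_left _ _)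
  have hM0 : 0 ≤ M := le_max_right _ _
  constructor
  · intro a ha hle
    refine ⟨M, fun x => ?_⟩
    have h1 := (holder ⟨a, Amem a ha⟩ (Φ x)).2
    have h2 : ‖(⟨a, Amem a ha⟩ : lp (fun _ : ℕ => ℝ) P)‖ ≤ 1 := by
      rw [Anorm a ha]; exact hle
    calc |∑' n, a n * φ n x| ≤ _ * ‖Φ x‖ := h1
      _ ≤ 1 * M := mul_le_mul h2 (hMΦ x) (norm_nonneg _) zero_le_one
      _ = M := one_mul M
  · intro ε hε
    rcases isEmpty_or_nonempty Ω with hΩ | hΩ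
    · exact ⟨{fun _ => 0}, Set.finite_singleton _,
        fun a ha hle => ⟨_, rfl, fun x => hΩ.elim x⟩⟩
    -- ε/4-net of the compact set A
    obtain ⟨t, htS, htfin, htcov⟩ :=
      Metric.finite_approx_of_totallyBounded hcompact.totallyBounded (ε/4) (by linarith)
    haveI : Fintype ↥t := htfin.fintype
    -- representatives
    have hrep : ∀ y : ↥t, ∃ x : Ω, ∀ n, (y : lp (fun _ : ℕ => ℝ) Q) n = φ n x :=
      fun y => htS y.2
    choose rep hrep' using hrep
    -- assignment of each x to a center
    have hcx : ∀ x : Ω, ∃ y : ↥t, dist (Φ x) (y : lp (fun _ : ℕ => ℝ) Q) < ε/4 := by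
      intro x
      have := htcov (ΦS x)
      simp only [Set.mem_iUnion, Metric.mem_ball] at this
      obtain ⟨y, hy, hd⟩ := this
      exact ⟨⟨y, hy⟩, hd⟩
    choose cx hcx' using hcx
    -- finite net of the box [-M, M]^t
    have hKcomp : IsCompact (Set.pi Set.univ fun _ : ↥t => Set.Icc (-M) M) :=
      isCompact_univ_pi fun _ => isCompact_Icc
    obtain ⟨W, hWK, hWfin, hWcov⟩ :=
      Metric.finite_approx_of_totallyBounded hKcomp.totallyBounded (ε/4) (by linarith)
    refine ⟨(fun w : ↥t → ℝ => fun x : Ω => w (cx x)) '' W, hWfin.image _, ?_⟩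
    intro a ha hle
    set A : lp (fun _ : ℕ => ℝ) P := ⟨a, Amem a ha⟩ with hA
    have hA1 : ‖A‖ ≤ 1 := by rw [hA, Anorm a ha]; exact hle
    -- the vector of values of f_a at the representatives
    set v : ↥t → ℝ := fun y => ∑' n, a n * φ n (rep y) with hv
    have hvK : v ∈ Set.pi Set.univ fun _ : ↥t => Set.Icc (-M) M := by
      intro y _
      have h1 := (holder A (Φ (rep y))).2
      have : |v y| ≤ M := by
        refine le_trans h1 ?_
        calc ‖A‖ * ‖Φ (rep y)‖ ≤ 1 * M :=
              mul_le_mul hA1 (hMΦ _) (norm_nonneg _) zero_le_one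
          _ = M := one_mul M
      exact abs_le.1 this
    have := hWcov hvK
    simp only [Set.mem_iUnion, Metric.mem_ball] at this
    obtain ⟨w, hw, hdvw⟩ := this
    refine ⟨fun x => w (cx x), ⟨w, hw, rfl⟩, fun x => ?_⟩
    -- main estimate
    set c : lp (fun _ : ℕ => ℝ) Q := (cx x : lp (fun _ : ℕ => ℝ) Q) with hc
    have hceq : ∀ n, c n = φ n (rep (cx x)) := hrep' (cx x)
    have hsum1 : Summable fun n => a n * φ n x := (holder A (Φ x)).1
    have hsum2 : Summable fun n => a n * c n := (holder A c).1
    have hdiff : (∑' n, a n * φ n x) - (∑' n, a n * c n) = ∑' n, a n * ((Φ x - c) n) := by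
      rw [← Summable.tsum_sub hsum1 hsum2]
      congr 1
      funext n
      have : (Φ x - c) n = (Φ x) n - c n := by
        rw [lp.coeFn_sub]; rfl
      rw [this]
      show a n * φ n x - a n * c n = a n * ((Φ x) n - c n)
      exact (mul_sub _ _ _).symm
    have hest1 : |(∑' n, a n * φ n x) - (∑' n, a n * c n)| ≤ ε/4 := by
      rw [hdiff]
      refine le_trans (holder A (Φ x - c)).2 ?_
      have hd : ‖Φ x - c‖ ≤ ε/4 := by
        rw [← dist_eq_norm]
        exact (hcx' x).le
      calc ‖A‖ * ‖Φ x - c‖ ≤ 1 * (ε/4) :=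
            mul_le_mul hA1 hd (norm_nonneg _) zero_le_one
        _ = ε/4 := one_mul _
    have hest2 : |v (cx x) - w (cx x)| ≤ ε/4 := by
      have := dist_le_pi_dist v w (cx x)
      rw [Real.dist_eq] at this
      exact this.trans hdvw.le
    have hveq : v (cx x) = ∑' n, a n * c n :=
      tsum_congr fun n => by rw [hceq n]
    calc |(∑' n, a n * φ n x) - w (cx x)|
        ≤ |(∑' n, a n * φ n x) - v (cx x)| + |v (cx x) - w (cx x)| := abs_sub_le _ _ _
      _ ≤ ε/4 + ε/4 := add_le_add (by rw [hveq]; exact hest1) hest2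
      _ ≤ ε := by linarith
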